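/- Let F : [0,1] × ℝ → ℝ be continuous and λ > 0. Define (Tu)(t) = ∫₀¹ G(t, s)·[F(s, u(s)) + λu(s)] ds for u ∈ C[0,1], where G(t, s) = e^{λ(1+s−t)}/(e^λ − 1) for 0 ≤ s < t ≤ 1 and G(t, s) = e^{λ(s−t)}/(e^λ − 1) for 0 ≤ t ≤ s ≤ 1. Then a function u ∈ C[0,1] is a fixed point of T (Tu = u) if and only if u is continuously differentiable on [0,1] and solves the first-order periodic problem u′(t) = F(t, u(t)) for t ∈ [0,1] with u(0) = u(1). -/

import Mathlib

/-- The Green function of the first-order periodic problem. -/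
noncomputable def greenG (lam t s : ℝ) : ℝ :=
  if s < t then Real.exp (lam * (1 + s - t)) / (Real.exp lam - 1)
  else Real.exp (lam * (s - t)) / (Real.exp lam - 1)

/-- The integral operator associated with the periodic problem. -/
noncomputable def periodicT (lam : ℝ) (F : ℝ → ℝ → ℝ) (u : ℝ → ℝ) (t : ℝ) : ℝ :=
  ∫ s in (0:ℝ)..1, greenG lam t s * (F s (u s) + lam * u s)

open Set MeasureTheory intervalIntegral

lemma expD_pos {lam : ℝ} (hlam : 0 < lam) : 0 < Real.exp lam - 1 := by
  have : (1:ℝ) < Real.exp lam := by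
    calc (1:ℝ) = Real.exp 0 := by simp
    _ < Real.exp lam := Real.exp_lt_exp.mpr hlam
  linarith

lemma intInt {lam : ℝ} {g : ℝ → ℝ} (hg : ContinuousOn g (Icc 0 1))
    {a b : ℝ} (ha : a ∈ Icc (0:ℝ) 1) (hb : b ∈ Icc (0:ℝ) 1) :
    IntervalIntegrable (fun s => Real.exp (lam * s) * g s) volume a b := by
  apply ContinuousOn.intervalIntegrable
  exact ((Real.continuous_exp.comp (continuous_const.mul continuous_id)).continuousOn).mul
    (hg.mono (uIcc_subset_Icc ha hb))

/-- Key representation of the Green-function integral. -/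
lemma green_integral_eq {lam : ℝ} (hlam : 0 < lam) {g : ℝ → ℝ}
    (hg : ContinuousOn g (Icc 0 1)) {t : ℝ} (ht : t ∈ Icc (0:ℝ) 1) :
    ∫ s in (0:ℝ)..1, greenG lam t s * g s
      = Real.exp (-(lam * t)) *
        ((∫ s in (0:ℝ)..t, Real.exp (lam * s) * g s)
          + (∫ s in (0:ℝ)..1, Real.exp (lam * s) * g s) / (Real.exp lam - 1)) := by
  obtain ⟨ht0, ht1⟩ := ht
  have hDpos : 0 < Real.exp lam - 1 := expD_pos hlam
  have hDne : Real.exp lam - 1 ≠ 0 := ne_of_gt hDpos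
  set D := Real.exp lam - 1 with hD
  set A : ℝ := ∫ s in (0:ℝ)..t, Real.exp (lam * s) * g s with hA
  set B : ℝ := ∫ s in (0:ℝ)..1, Real.exp (lam * s) * g s with hB
  have hne : ∀ᵐ s : ℝ, s ≠ t := by
    rw [MeasureTheory.ae_iff]
    simp only [ne_eq, not_not]
    simpa using Real.volume_singleton (a := t)
  -- ae equality on the first piece
  have e1 : ∀ᵐ s : ℝ, s ∈ Set.uIoc (0:ℝ) t →
      greenG lam t s * g s
        = (Real.exp (lam * (1 - t)) / D) * (Real.exp (lam * s) * g s) := by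
    filter_upwards [hne] with s hs hmem
    rw [Set.uIoc_of_le ht0] at hmem
    have hst : s < t := lt_of_le_of_ne hmem.2 hs
    simp only [greenG, if_pos hst]
    rw [show lam * (1 + s - t) = lam * (1 - t) + lam * s by ring, Real.exp_add]
    rw [hD]
    field_simp
  -- equality on the second piece (everywhere on uIoc t 1)
  have e2 : ∀ᵐ s : ℝ, s ∈ Set.uIoc t 1 →
      greenG lam t s * g s
        = (Real.exp (-(lam * t)) / D) * (Real.exp (lam * s) * g s) := by
    refine Filter.Eventually.of_forall fun s hmem => ?_
    rw [Set.uIoc_of_le ht1] at hmem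
    have hst : ¬ s < t := not_lt.mpr (le_of_lt hmem.1)
    simp only [greenG, if_neg hst]
    rw [show lam * (s - t) = -(lam * t) + lam * s by ring, Real.exp_add]
    rw [hD]
    field_simp
  have h0t : (0:ℝ) ∈ Icc (0:ℝ) 1 := ⟨le_refl 0, zero_le_one⟩
  have h1t : (1:ℝ) ∈ Icc (0:ℝ) 1 := ⟨zero_le_one, le_refl 1⟩
  have htI : t ∈ Icc (0:ℝ) 1 := ⟨ht0, ht1⟩
  -- integrability of the pieces
  have int1' : IntervalIntegrable
      (fun s => (Real.exp (lam * (1 - t)) / D) * (Real.exp (lam * s) * g s)) volume 0 t :=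
    (intInt hg h0t htI).const_mul _
  have int2' : IntervalIntegrable
      (fun s => (Real.exp (-(lam * t)) / D) * (Real.exp (lam * s) * g s)) volume t 1 :=
    (intInt hg htI h1t).const_mul _
  have int1 : IntervalIntegrable (fun s => greenG lam t s * g s) volume 0 t :=
    int1'.congr_ae (((ae_restrict_iff' measurableSet_uIoc).mpr
      (by filter_upwards [e1] with s h hm; exact (h hm).symm)))
  have int2 : IntervalIntegrable (fun s => greenG lam t s * g s) volume t 1 :=
    int2'.congr_ae (((ae_restrict_iff' measurableSet_uIoc).mpr
      (by filter_upwards [e2] with s h hm; exact (h hm).symm)))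
  have hsplit : (∫ s in (0:ℝ)..t, greenG lam t s * g s)
      + (∫ s in t..1, greenG lam t s * g s) = ∫ s in (0:ℝ)..1, greenG lam t s * g s :=
    integral_add_adjacent_intervals int1 int2
  have hsplit2 : A + (∫ s in t..(1:ℝ), Real.exp (lam * s) * g s) = B :=
    integral_add_adjacent_intervals (intInt hg h0t htI) (intInt hg htI h1t)
  have hI1 : (∫ s in (0:ℝ)..t, greenG lam t s * g s)
      = (Real.exp (lam * (1 - t)) / D) * A := by
    rw [intervalIntegral.integral_congr_ae e1, intervalIntegral.integral_const_mul]
  have hI2 : (∫ s in t..(1:ℝ), greenG lam t s * g s)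
      = (Real.exp (-(lam * t)) / D) * (B - A) := by
    rw [intervalIntegral.integral_congr_ae e2, intervalIntegral.integral_const_mul]
    rw [show (∫ s in t..(1:ℝ), Real.exp (lam * s) * g s) = B - A by linarith]
  rw [← hsplit, hI1, hI2]
  have hE : Real.exp (lam * (1 - t)) = (D + 1) * Real.exp (-(lam * t)) := by
    rw [show lam * (1 - t) = lam + -(lam*t) by ring, Real.exp_add, hD]
    ring_nf
  rw [hE]
  field_simp
  ring

/-- continuity of the integrand `s ↦ F s (u s) + lam * u s`. -/
lemma g_cont {F : ℝ → ℝ → ℝ}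
    (hF : ContinuousOn (fun p : ℝ × ℝ => F p.1 p.2) (Set.Icc 0 1 ×ˢ Set.univ))
    (lam : ℝ) {u : ℝ → ℝ} (hu : ContinuousOn u (Set.Icc 0 1)) :
    ContinuousOn (fun s => F s (u s) + lam * u s) (Icc 0 1) := by
  have h1 : ContinuousOn (fun s => F s (u s)) (Icc 0 1) := by
    have := hF.comp (continuousOn_id.prodMk hu) (fun x hx => ⟨hx, mem_univ _⟩)
    exact this
  exact h1.add (continuousOn_const.mul hu)

/-- For continuous `F` and `λ > 0`, a continuous function `u` on `[0,1]` is a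
fixed point of the operator `T` if and only if `u` is (continuously)
differentiable on `[0,1]` with `u'(t) = F(t, u(t))` and `u(0) = u(1)`. -/
theorem periodicT_fixed_point_iff_solution
    (F : ℝ → ℝ → ℝ)
    (hF : ContinuousOn (fun p : ℝ × ℝ => F p.1 p.2) (Set.Icc 0 1 ×ˢ Set.univ))
    (lam : ℝ) (hlam : 0 < lam)
    (u : ℝ → ℝ) (hu : ContinuousOn u (Set.Icc 0 1)) :
    (∀ t ∈ Set.Icc (0:ℝ) 1, periodicT lam F u t = u t) ↔
    ((∀ t ∈ Set.Icc (0:ℝ) 1, HasDerivWithinAt u (F t (u t)) (Set.Icc 0 1) t) ∧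
      u 0 = u 1) := by
  set g : ℝ → ℝ := fun s => F s (u s) + lam * u s with hgdef
  have hg : ContinuousOn g (Icc 0 1) := g_cont hF lam hu
  have hDpos : 0 < Real.exp lam - 1 := expD_pos hlam
  have hDne : Real.exp lam - 1 ≠ 0 := ne_of_gt hDpos
  set B : ℝ := ∫ s in (0:ℝ)..1, Real.exp (lam * s) * g s with hBdef
  set C : ℝ := B / (Real.exp lam - 1) with hCdef
  set A : ℝ → ℝ := fun t => ∫ s in (0:ℝ)..t, Real.exp (lam * s) * g s with hAdef
  have hrep : ∀ t ∈ Icc (0:ℝ) 1,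
      periodicT lam F u t = Real.exp (-(lam * t)) * (A t + C) := by
    intro t ht
    exact green_integral_eq hlam hg ht
  have h0I : (0:ℝ) ∈ Icc (0:ℝ) 1 := ⟨le_refl 0, zero_le_one⟩
  have h1I : (1:ℝ) ∈ Icc (0:ℝ) 1 := ⟨zero_le_one, le_refl 1⟩
  -- derivative of w t = exp(-(lam t)) * (A t + C)
  have hwderiv : ∀ t ∈ Icc (0:ℝ) 1,
      HasDerivWithinAt (fun x => Real.exp (-(lam * x)) * (A x + C))
        (-lam * (Real.exp (-(lam * t)) * (A t + C)) + g t) (Icc 0 1) t := by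
    intro t ht
    haveI : Fact (t ∈ Icc (0:ℝ) 1) := ⟨ht⟩
    have h1 : HasDerivWithinAt (fun x => Real.exp (-(lam * x)))
        (Real.exp (-(lam * t)) * (-lam)) (Icc 0 1) t := by
      have h := (((hasDerivAt_id t).const_mul (-lam)).exp).hasDerivWithinAt (s := Icc 0 1)
      simp only [id_eq, neg_mul, mul_one] at h
      exact h
    have hφ : ContinuousOn (fun s => Real.exp (lam * s) * g s) (Icc 0 1) :=
      ((Real.continuous_exp.comp (continuous_const.mul continuous_id)).continuousOn).mul hg
    have h2' : HasDerivWithinAt A (Real.exp (lam * t) * g t) (Icc 0 1) t := by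
      exact intervalIntegral.integral_hasDerivWithinAt_right
        (intInt hg h0I ht)
        (hφ.stronglyMeasurableAtFilter_nhdsWithin measurableSet_Icc t)
        (hφ t ht)
    have h2 : HasDerivWithinAt (fun x => A x + C) (Real.exp (lam * t) * g t) (Icc 0 1) t :=
      h2'.add_const C
    have := h1.mul h2
    refine this.congr_deriv (Eq.symm ?_)
    have hmul : Real.exp (-(lam * t)) * Real.exp (lam * t) = 1 := by
      rw [← Real.exp_add]; simp
    calc -lam * (Real.exp (-(lam * t)) * (A t + C)) + g t
        = -lam * (Real.exp (-(lam * t)) * (A t + C))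
          + (Real.exp (-(lam * t)) * Real.exp (lam * t)) * g t := by rw [hmul]; ring
      _ = Real.exp (-(lam * t)) * (-lam) * (A t + C)
          + Real.exp (-(lam * t)) * (Real.exp (lam * t) * g t) := by ring
  constructor
  · -- fixed point → solution
    intro hfix
    have heq : ∀ x ∈ Icc (0:ℝ) 1, u x = Real.exp (-(lam * x)) * (A x + C) := by
      intro x hx
      rw [← hfix x hx, hrep x hx]
    constructor
    · intro t ht
      have hw := hwderiv t ht
      have h' : HasDerivWithinAt u
          (-lam * (Real.exp (-(lam * t)) * (A t + C)) + g t) (Icc 0 1) t :=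
        hw.congr heq (heq t ht)
      have : -lam * (Real.exp (-(lam * t)) * (A t + C)) + g t = F t (u t) := by
        rw [← heq t ht, hgdef]
        ring
      rwa [this] at h'
    · have hu0 : u 0 = C := by
        rw [heq 0 h0I]
        simp [hAdef]
      have hu1 : u 1 = C := by
        rw [heq 1 h1I]
        have hAB : A 1 = B := rfl
        rw [hAB, hCdef]
        have hE : Real.exp (-(lam * 1)) = 1 / Real.exp lam := by
          rw [Real.exp_neg]; simp
        rw [hE]
        field_simp
        ring
      rw [hu0, hu1]
  · -- solution → fixed point
    rintro ⟨hder, hper⟩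
    -- v x = exp(lam x) * u x has derivative exp(lam x) * g x within Icc
    have hv : ∀ x ∈ Icc (0:ℝ) 1,
        HasDerivWithinAt (fun x => Real.exp (lam * x) * u x)
          (Real.exp (lam * x) * g x) (Icc 0 1) x := by
      intro x hx
      have h1 : HasDerivWithinAt (fun x => Real.exp (lam * x))
          (Real.exp (lam * x) * lam) (Icc 0 1) x := by
        have h := (((hasDerivAt_id x).const_mul lam).exp).hasDerivWithinAt (s := Icc 0 1)
        simp only [id_eq, mul_one] at h
        exact h
      have := h1.mul (hder x hx)
      refine this.congr_deriv (Eq.symm ?_)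
      simp only [hgdef]
      ring
    have hφ : ContinuousOn (fun s => Real.exp (lam * s) * g s) (Icc 0 1) :=
      ((Real.continuous_exp.comp (continuous_const.mul continuous_id)).continuousOn).mul hg
    have hvcont : ContinuousOn (fun x => Real.exp (lam * x) * u x) (Icc 0 1) :=
      ((Real.continuous_exp.comp (continuous_const.mul continuous_id)).continuousOn).mul hu
    have hftc : ∀ t ∈ Icc (0:ℝ) 1, A t = Real.exp (lam * t) * u t - u 0 := by
      intro t ht
      have key : ∫ s in (0:ℝ)..t, Real.exp (lam * s) * g s
          = Real.exp (lam * t) * u t - Real.exp (lam * 0) * u 0 := by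
        apply intervalIntegral.integral_eq_sub_of_hasDeriv_right_of_le ht.1
          (hvcont.mono (Icc_subset_Icc le_rfl ht.2))
        · intro x hx
          have hx1 : x < 1 := lt_of_lt_of_le hx.2 ht.2
          have hmem : Icc (0:ℝ) 1 ∈ nhds x := Icc_mem_nhds hx.1 hx1
          exact ((hv x ⟨hx.1.le, hx1.le⟩).hasDerivAt hmem).hasDerivWithinAt
        · exact intInt hg h0I ht
      rw [hAdef]
      simpa using key
    have hBu : B = (Real.exp lam - 1) * u 0 := by
      have h1 := hftc 1 h1I
      have hAB : A 1 = B := rfl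
      rw [hAB] at h1
      rw [h1, ← hper]
      simp
      ring
    have hCu : C = u 0 := by
      rw [hCdef, hBu]
      field_simp
    intro t ht
    rw [hrep t ht, hftc t ht, hCu]
    have hmul : Real.exp (-(lam * t)) * Real.exp (lam * t) = 1 := by
      rw [← Real.exp_add]; simp
    calc Real.exp (-(lam * t)) * (Real.exp (lam * t) * u t - u 0 + u 0)
        = (Real.exp (-(lam * t)) * Real.exp (lam * t)) * u t := by ring
      _ = u t := by rw [hmul]; ring
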